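/- In the group G = ⟨x, y, t | x^t = x^p, y^{t^{-1}} = y^p, [x,y] = 1, [[x, y^{j t^i}], x] = 1 (i,j ∈ ℤ)⟩, every element of the second derived subgroup [H,H] of the normal closure H of {x,y} has order a power of p. -/

import Mathlib

/-- The commutator `[a,b] = a⁻¹b⁻¹ab`. -/
def br {G : Type*} [Group G] (a b : G) : G := a⁻¹ * b⁻¹ * a * b

/-- Conjugation `a^b = b⁻¹ab`. -/
def cnj {G : Type*} [Group G] (a b : G) : G := b⁻¹ * a * b

namespace MikhailovGroup

/-- The generator `x` of the free group on three letters. -/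
def X : FreeGroup (Fin 3) := FreeGroup.of 0

/-- The generator `y` of the free group on three letters. -/
def Y : FreeGroup (Fin 3) := FreeGroup.of 1

/-- The generator `t` of the free group on three letters. -/
def T : FreeGroup (Fin 3) := FreeGroup.of 2

/-- The relations `x^t = x^p`, `y^{t⁻¹} = y^p`, `[x,y] = 1`, and
`[[x, y^{j t^i}], x] = 1` for all `i, j ∈ ℤ`. -/
def rels (p : ℕ) : Set (FreeGroup (Fin 3)) :=
  {cnj X T * (X ^ p)⁻¹, cnj Y T⁻¹ * (Y ^ p)⁻¹, br X Y} ∪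
    ⋃ (i : ℤ) (j : ℤ), {br (br X (cnj (Y ^ j) (T ^ i))) X}

/-- The group `G = ⟨x, y, t | x^t = x^p, y^{t⁻¹} = y^p, [x,y] = 1,
[[x, y^{j t^i}], x] = 1 (i,j ∈ ℤ)⟩`. -/
def G (p : ℕ) : Type := PresentedGroup (rels p)

instance (p : ℕ) : Group (G p) := by unfold G; infer_instance

/-- The image of the generator `x` in `G`. -/
def x (p : ℕ) : G p := PresentedGroup.of 0

/-- The image of the generator `y` in `G`. -/
def y (p : ℕ) : G p := PresentedGroup.of 1

/-- The image of the generator `t` in `G`. -/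
def t (p : ℕ) : G p := PresentedGroup.of 2

/-- The normal closure `H = ⟨x, y⟩^G`. -/
def H (p : ℕ) : Subgroup (G p) := Subgroup.normalClosure {x p, y p}

end MikhailovGroup

/-! ### Auxiliary general group lemmas -/

open scoped commutatorElement

section GeneralGroup

variable {Γ : Type*} [Group Γ]

theorem br_eq_one {a b : Γ} (h : br a b = 1) : Commute a b := by
  unfold br at h
  have h2 : b * a * (a⁻¹ * b⁻¹ * a * b) = b * a := by rw [h, mul_one]
  have h3 : a * b = b * a := by simpa [mul_assoc] using h2
  exact h3

theorem commute_conj {c d : Γ} (h : Commute c d) (g : Γ) :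
    Commute (g * c * g⁻¹) (g * d * g⁻¹) := by
  have h' : c * d = d * c := h
  show (g * c * g⁻¹) * (g * d * g⁻¹) = (g * d * g⁻¹) * (g * c * g⁻¹)
  simp only [mul_assoc, inv_mul_cancel_left]
  simp only [← mul_assoc, h']

theorem commute_conj' {c d : Γ} (h : Commute c d) (g : Γ) :
    Commute (g⁻¹ * c * g) (g⁻¹ * d * g) := by
  simpa using commute_conj h g⁻¹

theorem conj_word (g u v : Γ) (j : ℤ) :
    g * (u ^ (-j) * v * u ^ j) * g⁻¹ =
      (g * u * g⁻¹) ^ (-j) * (g * v * g⁻¹) * (g * u * g⁻¹) ^ j := by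
  rw [conj_zpow, conj_zpow]; group

theorem conj_word_pow (u v : Γ) (j : ℤ) (n : ℕ) :
    u ^ (-j) * v ^ n * u ^ j = (u ^ (-j) * v * u ^ j) ^ n := by
  have h : u ^ j = (u ^ (-j))⁻¹ := by group
  rw [h, conj_pow]

theorem comm_pow_lemma (g h : Γ) (hc : Commute ⁅g, h⁆ g) :
    ∀ n : ℕ, ⁅g ^ n, h⁆ = ⁅g, h⁆ ^ n := by
  intro n
  induction n with
  | zero => simp [commutatorElement_def]
  | succ n ih =>
    have key : ⁅g ^ (n + 1), h⁆ = g * ⁅g ^ n, h⁆ * g⁻¹ * ⁅g, h⁆ := by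
      simp only [commutatorElement_def]; group
    have hfix : g * ⁅g, h⁆ ^ n * g⁻¹ = ⁅g, h⁆ ^ n := by
      have h2 : Commute (⁅g, h⁆ ^ n) g := hc.pow_left n
      rw [mul_assoc, (h2.inv_right).eq, mul_inv_cancel_left]
    rw [key, ih, hfix, ← pow_succ]

theorem conj_closure_le (S : Set Γ) (g : Γ)
    (h : ∀ s ∈ S, g * s * g⁻¹ ∈ Subgroup.closure S) :
    ∀ k ∈ Subgroup.closure S, g * k * g⁻¹ ∈ Subgroup.closure S := by
  intro k hk
  induction hk using Subgroup.closure_induction with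
  | mem s hs => exact h s hs
  | one => simpa using one_mem _
  | mul a b _ _ ha hb =>
    have : g * (a * b) * g⁻¹ = (g * a * g⁻¹) * (g * b * g⁻¹) := by group
    rw [this]; exact mul_mem ha hb
  | inv a _ ha =>
    have : g * a⁻¹ * g⁻¹ = (g * a * g⁻¹)⁻¹ := by group
    rw [this]; exact inv_mem ha

theorem mem_normalizer_of_conj (S : Set Γ) (g : Γ)
    (h1 : ∀ s ∈ S, g * s * g⁻¹ ∈ Subgroup.closure S)
    (h2 : ∀ s ∈ S, g⁻¹ * s * g ∈ Subgroup.closure S) :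
    g ∈ Subgroup.normalizer (Subgroup.closure S : Set Γ) := by
  rw [Subgroup.mem_normalizer_iff]
  intro h
  constructor
  · exact fun hh => conj_closure_le S g h1 h hh
  · intro hh
    have h2' : ∀ s ∈ S, g⁻¹ * s * g⁻¹⁻¹ ∈ Subgroup.closure S := by simpa using h2
    have := conj_closure_le S g⁻¹ h2' _ hh
    simpa [mul_assoc] using this

end GeneralGroup

/-! ### The structure of `G p` -/

namespace MikhailovGroup

variable {p : ℕ}

theorem rel_one {r : FreeGroup (Fin 3)} (hr : r ∈ rels p) :
    (PresentedGroup.mk (rels p) r : G p) = 1 :=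
  (QuotientGroup.eq_one_iff r).mpr (Subgroup.subset_normalClosure hr)

theorem R1 : (t p)⁻¹ * x p * t p = x p ^ p := by
  have h := rel_one (p := p) (r := cnj X T * (X ^ p)⁻¹) (by left; left; rfl)
  simp only [cnj, map_mul, map_inv, map_pow, mul_inv_eq_one] at h
  exact h

theorem R2 : t p * y p * (t p)⁻¹ = y p ^ p := by
  have h := rel_one (p := p) (r := cnj Y T⁻¹ * (Y ^ p)⁻¹) (by left; right; left; rfl)
  simp only [cnj, map_mul, map_inv, map_pow, inv_inv, mul_inv_eq_one] at h
  exact h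

theorem R3 : x p * y p = y p * x p := by
  have h := rel_one (p := p) (r := br X Y) (by left; right; right; rfl)
  simp only [br, map_mul, map_inv] at h
  have h' : (x p)⁻¹ * (y p)⁻¹ * x p * y p = 1 := h
  have h2 : y p * x p * ((x p)⁻¹ * (y p)⁻¹ * x p * y p) = y p * x p := by rw [h', mul_one]
  simpa [mul_assoc] using h2

theorem R4 (i j : ℤ) :
    br (br (x p) (cnj (y p ^ j) (t p ^ i))) (x p) = 1 := by
  have h := rel_one (p := p) (r := br (br X (cnj (Y ^ j) (T ^ i)))  X)
    (by right; simp only [Set.mem_iUnion]; exact ⟨i, j, rfl⟩)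
  simp only [br, cnj, map_mul, map_inv, map_zpow] at h
  exact h

/-- `xa a = x^{t^{-a}}`, the `p^a`-th root of `x`. -/
def xa (p : ℕ) (a : ℕ) : G p := t p ^ a * x p * (t p ^ a)⁻¹

/-- `ya b = y^{t^b}`, the `p^b`-th root of `y`. -/
def ya (p : ℕ) (b : ℕ) : G p := (t p ^ b)⁻¹ * y p * t p ^ b

/-- `z a b j = (xa a)^{(ya b)^j}`. -/
def z (p : ℕ) (a b : ℕ) (j : ℤ) : G p := ya p b ^ (-j) * xa p a * ya p b ^ j

theorem xa_zero : xa p 0 = x p := by simp [xa]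

theorem ya_zero : ya p 0 = y p := by simp [ya]

theorem z_zero (a b : ℕ) : z p a b 0 = xa p a := by simp [z]

theorem xa_succ (a : ℕ) : xa p (a + 1) ^ p = xa p a := by
  unfold xa
  rw [conj_pow, ← R1]
  group

theorem ya_succ (b : ℕ) : ya p (b + 1) ^ p = ya p b := by
  have h : ya p (b + 1) = (t p ^ (b+1))⁻¹ * y p * ((t p ^ (b+1))⁻¹)⁻¹ := by
    rw [inv_inv]; rfl
  rw [h, conj_pow, ← R2]
  unfold ya
  group

theorem xa_lift (a k : ℕ) : xa p (a + k) ^ p ^ k = xa p a := by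
  induction k with
  | zero => simp
  | succ k ih =>
    have : a + (k + 1) = (a + k) + 1 := by omega
    rw [this, pow_succ', pow_mul, xa_succ, ih]

theorem ya_lift (b k : ℕ) : ya p (b + k) ^ p ^ k = ya p b := by
  induction k with
  | zero => simp
  | succ k ih =>
    have : b + (k + 1) = (b + k) + 1 := by omega
    rw [this, pow_succ', pow_mul, ya_succ, ih]

theorem xa_pow (a : ℕ) : xa p a ^ p ^ a = x p := by
  have := xa_lift (p := p) 0 a
  simpa [xa_zero] using this

theorem ya_pow (b : ℕ) : ya p b ^ p ^ b = y p := by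
  have := ya_lift (p := p) 0 b
  simpa [ya_zero] using this

theorem xa_comm (a a' : ℕ) : Commute (xa p a) (xa p a') := by
  have h1 : xa p (max a a') ^ p ^ (max a a' - a) = xa p a := by
    have := xa_lift (p := p) a (max a a' - a)
    rwa [show a + (max a a' - a) = max a a' by omega] at this
  have h2 : xa p (max a a') ^ p ^ (max a a' - a') = xa p a' := by
    have := xa_lift (p := p) a' (max a a' - a')
    rwa [show a' + (max a a' - a') = max a a' by omega] at this
  rw [← h1, ← h2]
  exact (Commute.refl _).pow_pow _ _

theorem ya_comm (b b' : ℕ) : Commute (ya p b) (ya p b') := by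
  have h1 : ya p (max b b') ^ p ^ (max b b' - b) = ya p b := by
    have := ya_lift (p := p) b (max b b' - b)
    rwa [show b + (max b b' - b) = max b b' by omega] at this
  have h2 : ya p (max b b') ^ p ^ (max b b' - b') = ya p b' := by
    have := ya_lift (p := p) b' (max b b' - b')
    rwa [show b' + (max b b' - b') = max b b' by omega] at this
  rw [← h1, ← h2]
  exact (Commute.refl _).pow_pow _ _

/-- The key consequence of relation R4: `z a b j` commutes with `xa a`. -/
theorem KC (a b : ℕ) (j : ℤ) : Commute (z p a b j) (xa p a) := by
  have h4 : Commute (br (x p) (cnj (y p ^ j) (t p ^ ((a + b : ℕ) : ℤ)))) (x p) :=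
    br_eq_one (R4 ((a + b : ℕ) : ℤ) j)
  have h5 : Commute (x p * br (x p) (cnj (y p ^ j) (t p ^ ((a + b : ℕ) : ℤ)))) (x p) :=
    Commute.mul_left (Commute.refl _) h4
  set u : G p := cnj (y p ^ j) (t p ^ ((a + b : ℕ) : ℤ)) with hu
  have h6 : x p * br (x p) u = u⁻¹ * x p * u := by unfold br; group
  rw [h6] at h5
  have h7 := commute_conj h5 (t p ^ a)
  have e2 : t p ^ a * x p * (t p ^ a)⁻¹ = xa p a := rfl
  have e1 : t p ^ a * (u⁻¹ * x p * u) * (t p ^ a)⁻¹ = z p a b j := by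
    have hya : ∀ m : ℤ, ya p b ^ m = (t p ^ b)⁻¹ * y p ^ m * t p ^ b := by
      intro m
      have : ya p b = (t p ^ b)⁻¹ * y p * ((t p ^ b)⁻¹)⁻¹ := by rw [inv_inv]; rfl
      rw [this, conj_zpow, inv_inv]
    rw [hu]
    unfold z cnj xa
    rw [hya, hya, zpow_natCast]
    push_cast [pow_add]
    group
  rw [e1, e2] at h7
  exact h7

theorem zc (a b : ℕ) (j k : ℤ) : Commute (z p a b j) (z p a b k) := by
  have h := commute_conj (KC (p := p) a b (j - k)) (ya p b ^ (-k))
  have e1 : ya p b ^ (-k) * z p a b (j - k) * (ya p b ^ (-k))⁻¹ = z p a b j := by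
    unfold z; group
  have e2 : ya p b ^ (-k) * xa p a * (ya p b ^ (-k))⁻¹ = z p a b k := by
    unfold z; group
  rwa [e1, e2] at h

theorem z_lift_a (a b : ℕ) (j : ℤ) : z p (a + 1) b j ^ p = z p a b j := by
  have h : z p (a + 1) b j = ya p b ^ (-j) * xa p (a + 1) * (ya p b ^ (-j))⁻¹ := by
    unfold z; group
  have h' : z p a b j = ya p b ^ (-j) * xa p a * (ya p b ^ (-j))⁻¹ := by
    unfold z; group
  rw [h, h', conj_pow, xa_succ]

theorem z_lift_a_k (a b : ℕ) (j : ℤ) (k : ℕ) : z p (a + k) b j ^ p ^ k = z p a b j := by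
  induction k with
  | zero => simp
  | succ k ih =>
    have : a + (k + 1) = (a + k) + 1 := by omega
    rw [this, pow_succ', pow_mul, z_lift_a, ih]

theorem z_lift_b (a b : ℕ) (j : ℤ) : z p a (b + 1) ((p : ℤ) * j) = z p a b j := by
  unfold z
  have h : ya p b ^ j = ya p (b + 1) ^ ((p : ℤ) * j) := by
    rw [← ya_succ (p := p) b, ← zpow_natCast (ya p (b+1)) p, ← zpow_mul]
  rw [← neg_mul]
  rw [show ((-(p:ℤ)) * j) = (p:ℤ) * (-j) by ring]
  have h' : ya p b ^ (-j) = ya p (b + 1) ^ ((p : ℤ) * (-j)) := by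
    rw [← ya_succ (p := p) b, ← zpow_natCast (ya p (b+1)) p, ← zpow_mul]
  rw [← h, ← h']

theorem z_lift_b_k (a b : ℕ) (j : ℤ) (k : ℕ) : z p a (b + k) ((p : ℤ) ^ k * j) = z p a b j := by
  induction k with
  | zero => simp
  | succ k ih =>
    have e : b + (k + 1) = (b + k) + 1 := by omega
    rw [show ((p:ℤ) ^ (k+1) * j) = (p : ℤ) * ((p:ℤ) ^ k * j) by ring, e, z_lift_b, ih]

theorem genComm (a b : ℕ) (j : ℤ) (a' b' : ℕ) (j' : ℤ) :
    Commute (z p a b j) (z p a' b' j') := by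
  have key : ∀ (a b : ℕ) (j : ℤ) (A B : ℕ), a ≤ A → b ≤ B →
      ∃ (J : ℤ) (n : ℕ), z p a b j = z p A B J ^ n := by
    intro a b j A B hA hB
    refine ⟨(p : ℤ) ^ (B - b) * j, p ^ (A - a), ?_⟩
    have h1 := z_lift_b_k (p := p) a b j (B - b)
    rw [show b + (B - b) = B by omega] at h1
    have h2 := z_lift_a_k (p := p) a B ((p : ℤ) ^ (B - b) * j) (A - a)
    rw [show a + (A - a) = A by omega] at h2
    rw [← h1, ← h2]
  obtain ⟨J, n, hJ⟩ := key a b j (max a a') (max b b') (le_max_left _ _) (le_max_left _ _)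
  obtain ⟨J', n', hJ'⟩ := key a' b' j' (max a a') (max b b') (le_max_right _ _) (le_max_right _ _)
  rw [hJ, hJ']
  exact (zc _ _ J J').pow_pow n n'

/-- The generating set of the abelian normal subgroup `A`. -/
def Sgen (p : ℕ) : Set (G p) := {g | ∃ a b : ℕ, ∃ j : ℤ, g = z p a b j}

/-- The abelian normal subgroup `A` containing all conjugates of `x` by powers of the `ya b`. -/
def AA (p : ℕ) : Subgroup (G p) := Subgroup.closure (Sgen p)

theorem AA_comm : ∀ g ∈ AA p, ∀ h ∈ AA p, Commute g h := by
  intro g hg h hh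
  induction hg, hh using Subgroup.closure_induction₂ with
  | mem g h hg hh =>
    obtain ⟨a, b, j, rfl⟩ := hg
    obtain ⟨a', b', j', rfl⟩ := hh
    exact genComm a b j a' b' j'
  | one_left h hh => exact Commute.one_left h
  | one_right g hg => exact Commute.one_right g
  | mul_left g g' h _ _ _ h1 h2 => exact h1.mul_left h2
  | mul_right g g' h _ _ _ h1 h2 => exact h1.mul_right h2
  | inv_left g h _ _ h1 => exact h1.inv_left
  | inv_right g h _ _ h1 => exact h1.inv_right

/-! ### Conjugation computations -/

theorem t_conj_xa (a : ℕ) : t p * xa p a * (t p)⁻¹ = xa p (a + 1) := by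
  unfold xa; group

theorem t_conj_ya_succ (b : ℕ) : t p * ya p (b + 1) * (t p)⁻¹ = ya p b := by
  unfold ya; group

theorem t_conj_ya_zero : t p * ya p 0 * (t p)⁻¹ = ya p 0 ^ p := by
  simp only [ya, pow_zero, inv_one, one_mul, mul_one]
  exact R2

theorem tinv_conj_xa_succ (a : ℕ) : (t p)⁻¹ * xa p (a + 1) * t p = xa p a := by
  unfold xa; group

theorem tinv_conj_xa_zero : (t p)⁻¹ * xa p 0 * t p = xa p 0 ^ p := by
  simp only [xa, pow_zero, inv_one, one_mul, mul_one]
  exact R1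

theorem tinv_conj_ya (b : ℕ) : (t p)⁻¹ * ya p b * t p = ya p (b + 1) := by
  unfold ya; group

theorem z_mem_AA (a b : ℕ) (j : ℤ) : z p a b j ∈ AA p :=
  Subgroup.subset_closure ⟨a, b, j, rfl⟩

theorem t_conj_z (a b : ℕ) (j : ℤ) : t p * z p a b j * (t p)⁻¹ ∈ AA p := by
  unfold z
  rw [conj_word]
  cases b with
  | zero =>
    rw [t_conj_xa, t_conj_ya_zero, ← zpow_natCast (ya p 0) p, ← zpow_mul, ← zpow_mul]
    rw [show ((p:ℤ) * -j) = -((p:ℤ) * j) by ring]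
    exact z_mem_AA (a + 1) 0 ((p : ℤ) * j)
  | succ b =>
    rw [t_conj_xa, t_conj_ya_succ]
    exact z_mem_AA (a + 1) b j

theorem tinv_conj_z (a b : ℕ) (j : ℤ) : (t p)⁻¹ * z p a b j * ((t p)⁻¹)⁻¹ ∈ AA p := by
  rw [inv_inv]
  unfold z
  have hw : (t p)⁻¹ * (ya p b ^ (-j) * xa p a * ya p b ^ j) * ((t p)⁻¹)⁻¹ =
      ((t p)⁻¹ * ya p b * ((t p)⁻¹)⁻¹) ^ (-j) * ((t p)⁻¹ * xa p a * ((t p)⁻¹)⁻¹) *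
        ((t p)⁻¹ * ya p b * ((t p)⁻¹)⁻¹) ^ j := conj_word _ _ _ _
  rw [inv_inv] at hw
  rw [hw, tinv_conj_ya]
  cases a with
  | zero =>
    rw [tinv_conj_xa_zero, conj_word_pow]
    exact pow_mem (z_mem_AA 0 (b + 1) j) p
  | succ a =>
    rw [tinv_conj_xa_succ]
    exact z_mem_AA a (b + 1) j

theorem x_commute_z (a b : ℕ) (j : ℤ) : Commute (z p a b j) (x p) := by
  have h := (KC (p := p) a b j).pow_right (p ^ a)
  rwa [xa_pow] at h

theorem x_conj_z (a b : ℕ) (j : ℤ) : x p * z p a b j * (x p)⁻¹ = z p a b j := by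
  have h := (x_commute_z (p := p) a b j).eq
  rw [← h, mul_inv_cancel_right]

theorem xinv_conj_z (a b : ℕ) (j : ℤ) : (x p)⁻¹ * z p a b j * x p = z p a b j := by
  rw [mul_assoc, (x_commute_z (p := p) a b j).eq, inv_mul_cancel_left]

theorem y_conj_z (a b : ℕ) (j : ℤ) :
    y p * z p a b j * (y p)⁻¹ = z p a b (j - (p ^ b : ℕ)) := by
  rw [← ya_pow (p := p) b]
  unfold z
  rw [← zpow_natCast (ya p b) (p ^ b)]
  group

theorem yinv_conj_z (a b : ℕ) (j : ℤ) :
    (y p)⁻¹ * z p a b j * y p = z p a b (j + (p ^ b : ℕ)) := by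
  rw [← ya_pow (p := p) b]
  unfold z
  rw [← zpow_natCast (ya p b) (p ^ b)]
  group

instance AA_normal : (AA p).Normal := by
  rw [← Subgroup.normalizer_eq_top_iff]
  rw [Subgroup.eq_top_iff']
  intro g
  refine PresentedGroup.generated_by (rels p) (Subgroup.normalizer (AA p : Set (G p))) (fun i => ?_) g
  fin_cases i
  · -- x
    refine mem_normalizer_of_conj (Sgen p) (x p) ?_ ?_
    · rintro s ⟨a, b, j, rfl⟩
      rw [x_conj_z]; exact z_mem_AA a b j
    · rintro s ⟨a, b, j, rfl⟩
      rw [xinv_conj_z]; exact z_mem_AA a b j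
  · -- y
    refine mem_normalizer_of_conj (Sgen p) (y p) ?_ ?_
    · rintro s ⟨a, b, j, rfl⟩
      rw [y_conj_z]; exact z_mem_AA a b _
    · rintro s ⟨a, b, j, rfl⟩
      rw [yinv_conj_z]; exact z_mem_AA a b _
  · -- t
    refine mem_normalizer_of_conj (Sgen p) (t p) ?_ ?_
    · rintro s ⟨a, b, j, rfl⟩
      exact t_conj_z a b j
    · rintro s ⟨a, b, j, rfl⟩
      have := tinv_conj_z (p := p) a b j
      rwa [inv_inv] at this

/-- The subgroup of `p`-power torsion elements of `A`. -/
def BB (p : ℕ) : Subgroup (G p) where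
  carrier := {g | g ∈ AA p ∧ ∃ k : ℕ, g ^ p ^ k = 1}
  one_mem' := ⟨one_mem _, 0, one_pow _⟩
  mul_mem' := by
    rintro g h ⟨hgA, k, hk⟩ ⟨hhA, l, hl⟩
    refine ⟨mul_mem hgA hhA, k + l, ?_⟩
    have hc : Commute g h := AA_comm g hgA h hhA
    rw [hc.mul_pow, pow_add, pow_mul, hk, one_pow, one_mul,
      mul_comm (p ^ k), pow_mul, hl, one_pow]
  inv_mem' := by
    rintro g ⟨hgA, k, hk⟩
    exact ⟨inv_mem hgA, k, by rw [inv_pow, hk, inv_one]⟩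

instance BB_normal : (BB p).Normal := by
  constructor
  rintro n ⟨hnA, k, hk⟩ g
  refine ⟨(AA_normal (p := p)).conj_mem n hnA g, k, ?_⟩
  rw [conj_pow, hk, mul_one, mul_inv_cancel]

end MikhailovGroup

namespace MikhailovGroup

variable {p : ℕ}

theorem c_commute (a b : ℕ) : Commute ⁅xa p a, ya p b⁆ (xa p a) := by
  have h : ⁅xa p a, ya p b⁆ = xa p a * (z p a b (-1))⁻¹ := by
    unfold z; simp only [commutatorElement_def]; group
  rw [h]
  refine Commute.mul_left (Commute.refl _) ?_
  have h2 := zc (p := p) a b (-1) 0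
  rw [z_zero] at h2
  exact h2.inv_left

theorem x_pow_conj (b : ℕ) : (t p ^ b)⁻¹ * x p * t p ^ b = x p ^ p ^ b := by
  induction b with
  | zero => simp
  | succ b ih =>
    have h1 : (t p ^ (b + 1))⁻¹ * x p * t p ^ (b + 1) =
        (t p ^ b)⁻¹ * ((t p)⁻¹ * x p * t p) * t p ^ b := by group
    have h2 : (t p ^ b)⁻¹ * x p ^ p * t p ^ b =
        ((t p ^ b)⁻¹ * x p * ((t p ^ b)⁻¹)⁻¹) ^ p := by rw [conj_pow]; rw [inv_inv]
    rw [h1, R1, h2, inv_inv, ih, pow_succ, pow_mul]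

theorem c_torsion (a b : ℕ) : ⁅xa p a, ya p b⁆ ^ p ^ (a + b) = 1 := by
  rw [← comm_pow_lemma _ _ (c_commute a b)]
  have hx : xa p a ^ p ^ (a + b) = x p ^ p ^ b := by
    rw [pow_add, pow_mul, xa_pow]
  rw [hx, ← x_pow_conj]
  have hcom : Commute ((t p ^ b)⁻¹ * x p * t p ^ b) (ya p b) := by
    unfold ya
    exact commute_conj' (R3 : Commute (x p) (y p)) (t p ^ b)
  exact commutatorElement_eq_one_iff_commute.mpr hcom

theorem c_mem_BB (a b : ℕ) : ⁅xa p a, ya p b⁆ ∈ BB p := by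
  refine ⟨?_, a + b, c_torsion a b⟩
  have h : ⁅xa p a, ya p b⁆ = z p a b 0 * (z p a b (-1))⁻¹ := by
    rw [z_zero]; unfold z; simp only [commutatorElement_def]; group
  rw [h]
  exact mul_mem (Subgroup.subset_closure ⟨a, b, 0, rfl⟩)
    (inv_mem (Subgroup.subset_closure ⟨a, b, -1, rfl⟩))

/-- The generating set of `H₀ = ⟨xa a, ya b⟩`. -/
def SH (p : ℕ) : Set (G p) := {g | (∃ a, g = xa p a) ∨ ∃ b, g = ya p b}

/-- The subgroup `H₀` generated by all `xa a` and `ya b`; it is normal and equals `H`. -/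
def HH (p : ℕ) : Subgroup (G p) := Subgroup.closure (SH p)

theorem xa_mem_HH (a : ℕ) : xa p a ∈ HH p := Subgroup.subset_closure (Or.inl ⟨a, rfl⟩)

theorem ya_mem_HH (b : ℕ) : ya p b ∈ HH p := Subgroup.subset_closure (Or.inr ⟨b, rfl⟩)

instance HH_normal : (HH p).Normal := by
  rw [← Subgroup.normalizer_eq_top_iff, Subgroup.eq_top_iff']
  intro g
  refine PresentedGroup.generated_by (rels p) (Subgroup.normalizer (HH p : Set (G p))) (fun i => ?_) g
  fin_cases i
  · exact Subgroup.le_normalizer (show x p ∈ HH p from xa_zero (p := p) ▸ xa_mem_HH 0)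
  · exact Subgroup.le_normalizer (show y p ∈ HH p from ya_zero (p := p) ▸ ya_mem_HH 0)
  · refine mem_normalizer_of_conj (SH p) (t p) ?_ ?_
    · rintro s (⟨a, rfl⟩ | ⟨b, rfl⟩)
      · rw [t_conj_xa]; exact xa_mem_HH _
      · cases b with
        | zero => rw [t_conj_ya_zero]; exact pow_mem (ya_mem_HH 0) p
        | succ b => rw [t_conj_ya_succ]; exact ya_mem_HH b
    · rintro s (⟨a, rfl⟩ | ⟨b, rfl⟩)
      · cases a with
        | zero => rw [tinv_conj_xa_zero]; exact pow_mem (xa_mem_HH 0) p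
        | succ a => rw [tinv_conj_xa_succ]; exact xa_mem_HH a
      · rw [tinv_conj_ya]; exact ya_mem_HH _

theorem H_le_HH : H p ≤ HH p := by
  apply Subgroup.normalClosure_le_normal
  intro g hg
  simp only [Set.mem_insert_iff, Set.mem_singleton_iff] at hg
  rcases hg with rfl | rfl
  · exact xa_zero (p := p) ▸ xa_mem_HH 0
  · exact ya_zero (p := p) ▸ ya_mem_HH 0

theorem commutator_H_le_BB : ⁅H p, H p⁆ ≤ BB p := by
  rw [Subgroup.commutator_le]
  intro g hg g' hg'
  have hg0 : g ∈ HH p := H_le_HH hg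
  have hg0' : g' ∈ HH p := H_le_HH hg'
  have main : Commute (QuotientGroup.mk' (BB p) g) (QuotientGroup.mk' (BB p) g') := by
    clear hg hg'
    induction hg0, hg0' using Subgroup.closure_induction₂ with
    | mem s s' hs hs' =>
      have key : ∀ a b : ℕ,
          Commute (QuotientGroup.mk' (BB p) (xa p a)) (QuotientGroup.mk' (BB p) (ya p b)) := by
        intro a b
        have h1 : (QuotientGroup.mk' (BB p)) ⁅xa p a, ya p b⁆ = 1 :=
          (QuotientGroup.eq_one_iff _).mpr (c_mem_BB a b)
        rw [map_commutatorElement] at h1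
        exact commutatorElement_eq_one_iff_commute.mp h1
      rcases hs with ⟨a, rfl⟩ | ⟨b, rfl⟩ <;> rcases hs' with ⟨a', rfl⟩ | ⟨b', rfl⟩
      · exact (xa_comm a a').map _
      · exact key a b'
      · exact (key a' b).symm
      · exact (ya_comm b b').map _
    | one_left h hh => simp only [map_one]; exact Commute.one_left _
    | one_right g hg => simp only [map_one]; exact Commute.one_right _
    | mul_left g g' h _ _ _ h1 h2 => simp only [map_mul]; exact h1.mul_left h2
    | mul_right g g' h _ _ _ h1 h2 => simp only [map_mul]; exact h1.mul_right h2
    | inv_left g h _ _ h1 => simp only [map_inv]; exact h1.inv_left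
    | inv_right g h _ _ h1 => simp only [map_inv]; exact h1.inv_right
  have h1 : (QuotientGroup.mk' (BB p)) ⁅g, g'⁆ = 1 := by
    rw [map_commutatorElement]
    exact commutatorElement_eq_one_iff_commute.mpr main
  exact (QuotientGroup.eq_one_iff _).mp h1

end MikhailovGroup

open MikhailovGroup in
/-- every element of the commutator subgroup `[H,H]` of the normal closure
`H` of `{x,y}` in `G` has order a power of `p`. -/
theorem mikhailov_derived_H_p_torsion (p : ℕ) (hp : p.Prime) :
    ∀ g ∈ ⁅H p, H p⁆, ∃ k : ℕ, g ^ p ^ k = 1 := by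
  intro g hg
  exact (commutator_H_le_BB (p := p) hg).2
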